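/- arXiv:2511.01938 — 5 statements merged into one kernel-verified Lean document; each statement's English description precedes it below -/
import Mathlib

section
/- Let F : ℝ^d → ℝ^{km} be continuously differentiable, let y ∈ ℝ^{km}, define L(θ) = ‖F(θ) − y‖², L_λ(θ) = L(θ) + λ‖θ‖² for λ > 0, Z = {θ : L(θ) = 0}, and dist_Z(θ) = inf_{φ∈Z} ‖θ − φ‖. Then for every θ₀ ∈ Z and every ε > 0, there exists λ_ε > 0 such that for all 0 < λ < λ_ε, every differentiable trajectory θ : [0,∞) → ℝ^d with θ(0) = θ₀ and θ′(t) = −∇L_λ(θ(t)) for all t ≥ 0 satisfies sup_{t ≥ 0} dist_Z(θ(t)) < ε. -/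
/-- **Stability of the zero-loss set.** For every initialization in the
zero-loss set `Z` and every `ε > 0`, there is `λ_ε > 0` such that for all `0 < λ < λ_ε`,
every gradient-flow trajectory of the regularized loss `L_λ` starting there satisfies
`sup_{t ≥ 0} dist_Z(θ(t)) < ε` (expressed as: some bound `c < ε` dominates all distances). -/
theorem stmt_1 (d km : ℕ)
    (F : EuclideanSpace ℝ (Fin d) → EuclideanSpace ℝ (Fin km))
    (hF : ContDiff ℝ 1 F)
    (y : EuclideanSpace ℝ (Fin km))
    (L : EuclideanSpace ℝ (Fin d) → ℝ)
    (hLdef : ∀ θ, L θ = ‖F θ - y‖ ^ 2)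
    (Lreg : ℝ → EuclideanSpace ℝ (Fin d) → ℝ)
    (hLregdef : ∀ lam θ, Lreg lam θ = L θ + lam * ‖θ‖ ^ 2)
    (Z : Set (EuclideanSpace ℝ (Fin d)))
    (hZ : Z = {ψ | L ψ = 0})
    (θ₀ : EuclideanSpace ℝ (Fin d)) (hθ₀ : θ₀ ∈ Z)
    (ε : ℝ) (hε : 0 < ε) :
    ∃ lamε > (0 : ℝ), ∀ lam : ℝ, 0 < lam → lam < lamε →
      ∀ θ : ℝ → EuclideanSpace ℝ (Fin d), θ 0 = θ₀ →
        (∀ t : ℝ, 0 ≤ t → HasDerivAt θ (-(gradient (Lreg lam) (θ t))) t) →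
        ∃ c : ℝ, c < ε ∧ ∀ t : ℝ, 0 ≤ t → Metric.infDist (θ t) Z ≤ c := by
  have hL0 : ∀ ψ, 0 ≤ L ψ := fun ψ => by rw [hLdef]; positivity
  have hLθ₀ : L θ₀ = 0 := by rw [hZ] at hθ₀; exact hθ₀
  have hCont : ContDiff ℝ 1 L := by
    have hfe : L = (fun ψ => ‖F ψ - y‖ ^ 2) := funext fun ψ => hLdef ψ
    rw [hfe]; exact (hF.sub contDiff_const).norm_sq (𝕜 := ℝ)
  set S : ℝ := ‖θ₀‖ with hS
  set K : Set (EuclideanSpace ℝ (Fin d)) :=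
    Metric.closedBall 0 S ∩ {ψ | ε / 2 ≤ Metric.infDist ψ Z} with hK
  have hKc : IsCompact K :=
    (isCompact_closedBall 0 S).inter_right
      (isClosed_le continuous_const (Metric.continuous_infDist_pt Z))
  obtain ⟨δ₀, hδ₀pos, hδ₀⟩ : ∃ δ₀ > 0, ∀ ψ ∈ K, δ₀ ≤ L ψ := by
    rcases K.eq_empty_or_nonempty with h | h
    · exact ⟨1, one_pos, by simp [h]⟩
    · obtain ⟨ψ₀, hψ₀K, hmin⟩ := hKc.exists_isMinOn h hCont.continuous.continuousOn
      refine ⟨L ψ₀, ?_, fun ψ hψ => hmin hψ⟩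
      rcases (hL0 ψ₀).lt_or_eq with h' | h'
      · exact h'
      · exfalso
        have hmem : ψ₀ ∈ Z := by rw [hZ]; exact h'.symm
        have h1 := Metric.infDist_zero_of_mem hmem
        have h2 := hψ₀K.2
        simp only [Set.mem_setOf_eq] at h2
        rw [h1] at h2; linarith
  refine ⟨δ₀ / (S ^ 2 + 1), by positivity, fun lam hlam hlam' θ hθ0 hθ' => ?_⟩
  -- the regularized loss is C¹
  have hCreg : ContDiff ℝ 1 (Lreg lam) := by
    have hfe : Lreg lam = (fun ψ => L ψ + lam * ‖ψ‖ ^ 2) := funext fun ψ => hLregdef lam ψ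
    rw [hfe]
    exact hCont.add (contDiff_const.mul (contDiff_norm_sq ℝ))
  have hdiff : Differentiable ℝ (Lreg lam) := hCreg.differentiable one_ne_zero
  set g : ℝ → ℝ := fun t => Lreg lam (θ t) with hg
  have hgd : ∀ t, 0 ≤ t → HasDerivAt g (-‖gradient (Lreg lam) (θ t)‖ ^ 2) t := by
    intro t ht
    have h1 := (hdiff (θ t)).hasGradientAt
    have h2 := h1.hasFDerivAt.comp_hasDerivAt t (hθ' t ht)
    rw [InnerProductSpace.toDual_apply_apply, inner_neg_right, real_inner_self_eq_norm_sq] at h2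
    exact h2
  have hmono : AntitoneOn g (Set.Ici (0 : ℝ)) := by
    apply antitoneOn_of_deriv_nonpos (convex_Ici 0)
    · exact fun t ht => ((hgd t ht).continuousAt).continuousWithinAt
    · intro t ht
      rw [interior_Ici] at ht
      exact ((hgd t ht.le).differentiableAt).differentiableWithinAt
    · intro t ht
      rw [interior_Ici] at ht
      rw [(hgd t ht.le).deriv]
      exact neg_nonpos.mpr (by positivity)
  have hg0 : g 0 = lam * S ^ 2 := by
    simp [hg, hθ0, hLregdef, hLθ₀, hS]
  have key : ∀ t, 0 ≤ t → Lreg lam (θ t) ≤ lam * S ^ 2 := by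
    intro t ht
    have := hmono Set.self_mem_Ici ht ht
    rw [hg0] at this
    exact this
  have hlamS : lam * S ^ 2 < δ₀ := by
    have h1 : lam * (S ^ 2 + 1) < δ₀ := by
      rw [lt_div_iff₀ (by positivity)] at hlam'
      exact hlam'
    nlinarith
  refine ⟨ε / 2, by linarith, fun t ht => ?_⟩
  have hLt : L (θ t) ≤ lam * S ^ 2 := by
    have h1 := key t ht
    rw [hLregdef] at h1
    nlinarith [norm_nonneg (θ t), sq_nonneg ‖θ t‖]
  have hnorm : ‖θ t‖ ≤ S := by
    have h1 := key t ht
    rw [hLregdef] at h1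
    have h2 : lam * ‖θ t‖ ^ 2 ≤ lam * S ^ 2 := by nlinarith [hL0 (θ t)]
    have h3 : ‖θ t‖ ^ 2 ≤ S ^ 2 := (mul_le_mul_iff_right₀ hlam).mp h2
    nlinarith [norm_nonneg (θ t), norm_nonneg θ₀]
  have hnotK : θ t ∉ K := by
    intro hmem
    have := hδ₀ (θ t) hmem
    linarith
  have hball : θ t ∈ Metric.closedBall 0 S := by
    rw [Metric.mem_closedBall, dist_zero_right]; exact hnorm
  by_contra hcon
  push_neg at hcon
  exact hnotK ⟨hball, le_of_lt hcon⟩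
end

section
/- Let F : ℝ^d → ℝ^{km} be continuously differentiable, y ∈ ℝ^{km}, L(θ) = ‖F(θ) − y‖², L_λ(θ) = L(θ) + λ‖θ‖² with λ > 0, and Z = {θ : L(θ) = 0}. Then every differentiable trajectory θ : [0,∞) → ℝ^d with θ(0) ∈ Z and θ′(t) = −∇L_λ(θ(t)) for all t ≥ 0 satisfies ‖θ(t)‖ ≤ ‖θ(0)‖ for all t ≥ 0. -/
open InnerProductSpace

/-- A gradient-flow trajectory of the regularized loss `L_λ` starting
in the zero-loss set never increases the parameter norm: `‖θ(t)‖ ≤ ‖θ(0)‖` for `t ≥ 0`. -/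
theorem stmt_2 (d km : ℕ)
    (F : EuclideanSpace ℝ (Fin d) → EuclideanSpace ℝ (Fin km))
    (hF : ContDiff ℝ 1 F)
    (y : EuclideanSpace ℝ (Fin km))
    (L : EuclideanSpace ℝ (Fin d) → ℝ)
    (hLdef : ∀ θ, L θ = ‖F θ - y‖ ^ 2)
    (lam : ℝ) (hlam : 0 < lam)
    (Lreg : EuclideanSpace ℝ (Fin d) → ℝ)
    (hLregdef : ∀ θ, Lreg θ = L θ + lam * ‖θ‖ ^ 2)
    (θ : ℝ → EuclideanSpace ℝ (Fin d))
    (hθ₀ : L (θ 0) = 0)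
    (hflow : ∀ t : ℝ, 0 ≤ t → HasDerivAt θ (-(gradient Lreg (θ t))) t) :
    ∀ t : ℝ, 0 ≤ t → ‖θ t‖ ≤ ‖θ 0‖ := by
  have hLC : ContDiff ℝ 1 L := by
    have h1 : ContDiff ℝ 1 fun x => ‖F x - y‖ ^ 2 :=
      ContDiff.norm_sq ℝ (hF.sub contDiff_const)
    have : L = fun x => ‖F x - y‖ ^ 2 := funext hLdef
    rw [this]; exact h1
  have hLregC : ContDiff ℝ 1 Lreg := by
    have : Lreg = fun x => L x + lam * ‖x‖ ^ 2 := funext hLregdef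
    rw [this]
    exact hLC.add (contDiff_const.mul (contDiff_norm_sq ℝ))
  have hDiff : Differentiable ℝ Lreg := hLregC.differentiable one_ne_zero
  -- derivative of composed function
  have hderiv : ∀ t : ℝ, 0 ≤ t →
      HasDerivAt (fun s => Lreg (θ s)) (-‖gradient Lreg (θ t)‖ ^ 2) t := by
    intro t ht
    have hg := (hDiff (θ t)).hasGradientAt
    have hfd := hg.hasFDerivAt
    have := hfd.comp_hasDerivAt t (hflow t ht)
    simp only [toDual_apply_apply, inner_neg_right, real_inner_self_eq_norm_sq] at this
    exact this
  have hanti : AntitoneOn (fun s => Lreg (θ s)) (Set.Ici (0:ℝ)) := by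
    apply antitoneOn_of_deriv_nonpos (convex_Ici 0)
    · intro t ht
      exact (hderiv t ht).continuousAt.continuousWithinAt
    · intro t ht
      rw [interior_Ici] at ht
      exact (hderiv t (le_of_lt ht)).differentiableAt.differentiableWithinAt
    · intro t ht
      rw [interior_Ici] at ht
      rw [(hderiv t (le_of_lt ht)).deriv]
      exact neg_nonpos.mpr (by positivity)
  intro t ht
  have key : Lreg (θ t) ≤ Lreg (θ 0) :=
    hanti (Set.self_mem_Ici) ht ht
  have hLnn : 0 ≤ L (θ t) := by rw [hLdef]; positivity
  have h0 : Lreg (θ 0) = lam * ‖θ 0‖ ^ 2 := by rw [hLregdef, hθ₀, zero_add]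
  have ht' : lam * ‖θ t‖ ^ 2 ≤ lam * ‖θ 0‖ ^ 2 := by
    rw [← h0]
    have := hLregdef (θ t)
    nlinarith [key]
  have hsq : ‖θ t‖ ^ 2 ≤ ‖θ 0‖ ^ 2 := le_of_mul_le_mul_left (by linarith) hlam
  exact (pow_le_pow_iff_left₀ (norm_nonneg _) (norm_nonneg _) two_ne_zero).mp hsq
end

section
/- Let d ≥ km, let F : ℝ^d → ℝ^{km} be twice continuously differentiable, y ∈ ℝ^{km}, L(θ) = ‖F(θ) − y‖², and Z = {θ : L(θ) = 0}. Suppose θ ∈ Z is non-singular, i.e., rank(DF(θ)) = km. Define the tangent space T_θ as the set of all v ∈ ℝ^d for which there exists a twice continuously differentiable curve s : ℝ → ℝ^d with s(0) = θ, s′(0) = v, and L(s(t)) = 0 for all t ∈ ℝ. Then T_θ = {v ∈ ℝ^d : ∇²L(θ) v = 0}, i.e., the tangent space at θ is exactly the null space of the Hessian of L at θ. -/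
open scoped RealInnerProductSpace

noncomputable section

private lemma grad_formula {E G : Type*} [NormedAddCommGroup E] [InnerProductSpace ℝ E]
    [NormedAddCommGroup G] [InnerProductSpace ℝ G] [CompleteSpace E] [CompleteSpace G]
    (F : E → G) (hF : Differentiable ℝ F) (y : G) (L : E → ℝ)
    (hLdef : ∀ θ, L θ = ‖F θ - y‖ ^ 2) (x : E) :
    gradient L x = (2 : ℝ) • ContinuousLinearMap.adjoint (fderiv ℝ F x) (F x - y) := by
  apply HasGradientAt.gradient
  have hFx := (hF x).hasFDerivAt
  have h1 := (hFx.sub_const y).inner ℝ (hFx.sub_const y)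
  have hLeq : L = fun z => ⟪F z - y, F z - y⟫ := by
    funext z
    rw [hLdef, real_inner_self_eq_norm_sq]
  show HasFDerivAt L (InnerProductSpace.toDual ℝ E _) x
  rw [hLeq]
  refine h1.congr_fderiv ?_
  ext w
  simp only [InnerProductSpace.toDual_apply_apply, fderivInnerCLM_apply,
    ContinuousLinearMap.coe_comp', Function.comp_apply, ContinuousLinearMap.prod_apply,
    real_inner_smul_left, ContinuousLinearMap.adjoint_inner_left]
  rw [real_inner_comm (F x - y)]
  ring

set_option maxHeartbeats 1000000 in
/-- **tangent space = null space of the Hessian.** Let `L(θ) = ‖F θ - y‖²`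
with `F` twice continuously differentiable, `d ≥ km`, and let `θ` be a non-singular
zero-loss point (`L θ = 0`, Jacobian of full rank `km`). Then the set of tangent
directions at `θ` (velocities of `C²` curves through `θ` staying in the zero-loss set)
is exactly the null space of the Hessian `∇²L(θ)` (the Fréchet derivative of the
gradient of `L`). -/
theorem stmt_8 (d km : ℕ) (hd : km ≤ d)
    (F : EuclideanSpace ℝ (Fin d) → EuclideanSpace ℝ (Fin km))
    (hF : ContDiff ℝ 2 F)
    (y : EuclideanSpace ℝ (Fin km))
    (L : EuclideanSpace ℝ (Fin d) → ℝ)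
    (hLdef : ∀ θ, L θ = ‖F θ - y‖ ^ 2)
    (θ : EuclideanSpace ℝ (Fin d)) (hθZ : L θ = 0)
    (hrank : Module.finrank ℝ (LinearMap.range (fderiv ℝ F θ).toLinearMap) = km) :
    {v : EuclideanSpace ℝ (Fin d) |
        ∃ s : ℝ → EuclideanSpace ℝ (Fin d),
          ContDiff ℝ 2 s ∧ s 0 = θ ∧ HasDerivAt s v 0 ∧ ∀ t : ℝ, L (s t) = 0}
      = {v : EuclideanSpace ℝ (Fin d) | fderiv ℝ (gradient L) θ v = 0} := by
  classical
  have hFd : Differentiable ℝ F := hF.differentiable (by norm_num)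
  have hFθ : F θ = y := by
    have h := hLdef θ
    rw [hθZ] at h
    have hnorm : ‖F θ - y‖ = 0 := by nlinarith [norm_nonneg (F θ - y)]
    rwa [norm_eq_zero, sub_eq_zero] at hnorm
  set A := fderiv ℝ F θ with hA
  have hgrad : ∀ x, gradient L x
      = (2 : ℝ) • ContinuousLinearMap.adjoint (fderiv ℝ F x) (F x - y) :=
    grad_formula F hFd y L hLdef
  -- adjoint as a continuous linear map
  let adjL : (EuclideanSpace ℝ (Fin d) →L[ℝ] EuclideanSpace ℝ (Fin km)) →ₗ[ℝ]
      (EuclideanSpace ℝ (Fin km) →L[ℝ] EuclideanSpace ℝ (Fin d)) :=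
    { toFun := ContinuousLinearMap.adjoint
      map_add' := fun a b => by simp
      map_smul' := fun r a => by simp }
  let adjC := LinearMap.toContinuousLinearMap adjL
  have hd2 : HasFDerivAt (fderiv ℝ F) (fderiv ℝ (fderiv ℝ F) θ) θ :=
    (((hF.fderiv_right (m := 1) (by norm_num)).differentiable one_ne_zero) θ).hasFDerivAt
  have hc : HasFDerivAt (fun x => ContinuousLinearMap.adjoint (fderiv ℝ F x))
      (adjC.comp (fderiv ℝ (fderiv ℝ F) θ)) θ := adjC.hasFDerivAt.comp θ hd2
  have hu : HasFDerivAt (fun x => F x - y) A θ := (hFd θ).hasFDerivAt.sub_const y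
  have happ := (hc.clm_apply hu).const_smul (2 : ℝ)
  have hgradF : HasFDerivAt (gradient L)
      ((2 : ℝ) • ((ContinuousLinearMap.adjoint A).comp A
        + (adjC.comp (fderiv ℝ (fderiv ℝ F) θ)).flip (F θ - y))) θ := by
    have hfun : gradient L
        = fun x => (2 : ℝ) • ContinuousLinearMap.adjoint (fderiv ℝ F x) (F x - y) :=
      funext hgrad
    rw [hfun]
    exact happ
  have hM : ∀ v, fderiv ℝ (gradient L) θ v
      = (2 : ℝ) • (ContinuousLinearMap.adjoint A) (A v) := by
    intro v
    rw [hgradF.fderiv]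
    simp [hFθ]
  have hnull : ∀ v, fderiv ℝ (gradient L) θ v = 0 ↔ A v = 0 := by
    intro v
    rw [hM v]
    constructor
    · intro h
      have h2 : (ContinuousLinearMap.adjoint A) (A v) = 0 := by
        rcases smul_eq_zero.mp h with h | h
        · norm_num at h
        · exact h
      have h3 : ⟪A v, A v⟫ = 0 := by
        rw [← ContinuousLinearMap.adjoint_inner_left, h2, inner_zero_left]
      exact inner_self_eq_zero.mp h3
    · intro h
      rw [h, map_zero, smul_zero]
  ext v
  simp only [Set.mem_setOf_eq]
  rw [hnull v]
  constructor
  · rintro ⟨s, hs2, hs0, hsv, hsL⟩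
    have hFy : ∀ t, F (s t) = y := by
      intro t
      have h := hLdef (s t)
      rw [hsL t] at h
      have hnorm : ‖F (s t) - y‖ = 0 := by nlinarith [norm_nonneg (F (s t) - y)]
      rwa [norm_eq_zero, sub_eq_zero] at hnorm
    have hcomp : HasDerivAt (fun t => F (s t)) (A v) 0 := by
      have h := (hFd (s 0)).hasFDerivAt.comp_hasDerivAt 0 hsv
      rwa [hs0] at h
    have hconst : HasDerivAt (fun t : ℝ => F (s t)) 0 0 := by
      have h : (fun t : ℝ => F (s t)) = fun _ => y := funext hFy
      rw [h]
      exact hasDerivAt_const 0 y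
    exact hcomp.unique hconst
  · intro hAv
    -- construct the curve via the inverse function theorem
    set K := LinearMap.ker A.toLinearMap with hK
    let P := K.orthogonalProjectionOnto
    let T := A.prod (P : EuclideanSpace ℝ (Fin d) →L[ℝ] K)
    have hPmem : ∀ u (hu : u ∈ K), P u = ⟨u, hu⟩ := fun u hu =>
      Submodule.orthogonalProjectionOnto_mem_subspace_eq_self (⟨u, hu⟩ : K)
    have hTinj : Function.Injective T := by
      intro a b hab
      have h0 : T (a - b) = 0 := by rw [map_sub, hab, sub_self]
      have h1 : A (a - b) = 0 := congrArg Prod.fst h0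
      have h2 : P (a - b) = 0 := congrArg Prod.snd h0
      have hm : a - b ∈ K := h1
      rw [hPmem _ hm] at h2
      have h3 : a - b = 0 := Subtype.ext_iff.mp h2
      exact sub_eq_zero.mp h3
    have hfr : Module.finrank ℝ (EuclideanSpace ℝ (Fin d))
        = Module.finrank ℝ (EuclideanSpace ℝ (Fin km) × K) := by
      have hrn := LinearMap.finrank_range_add_finrank_ker
        (A : EuclideanSpace ℝ (Fin d) →ₗ[ℝ] EuclideanSpace ℝ (Fin km))
      have hrange : Module.finrank ℝ
          (LinearMap.range (A : EuclideanSpace ℝ (Fin d) →ₗ[ℝ] EuclideanSpace ℝ (Fin km)))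
          = km := hrank
      have hker : Module.finrank ℝ
          (LinearMap.ker (A : EuclideanSpace ℝ (Fin d) →ₗ[ℝ] EuclideanSpace ℝ (Fin km)))
          = Module.finrank ℝ K := rfl
      rw [Module.finrank_prod, finrank_euclideanSpace_fin]
      rw [finrank_euclideanSpace_fin] at hrn ⊢
      rw [hrange, hker] at hrn
      omega
    have hTsurj : Function.Surjective T :=
      (LinearMap.injective_iff_surjective_of_finrank_eq_finrank hfr).mp hTinj
    let eL := LinearEquiv.ofBijective
      (T : EuclideanSpace ℝ (Fin d) →ₗ[ℝ] EuclideanSpace ℝ (Fin km) × K) ⟨hTinj, hTsurj⟩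
    let e := eL.toContinuousLinearEquiv
    have heT' : ∀ u, e u = T u := fun u =>
      congrFun eL.coe_toContinuousLinearEquiv' u
    have heT : (e : EuclideanSpace ℝ (Fin d) →L[ℝ] EuclideanSpace ℝ (Fin km) × K) = T :=
      ContinuousLinearMap.ext fun u => heT' u
    set Φ : EuclideanSpace ℝ (Fin d) → EuclideanSpace ℝ (Fin km) × K :=
      fun x => (F x, P x) with hΦdef
    have hΦ' : HasFDerivAt Φ (e : EuclideanSpace ℝ (Fin d) →L[ℝ] _) θ := by
      rw [heT]
      exact (hFd θ).hasFDerivAt.prodMk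
        (P : EuclideanSpace ℝ (Fin d) →L[ℝ] K).hasFDerivAt
    have hΦc : ContDiffAt ℝ 2 Φ θ :=
      (hF.contDiffAt).prodMk ((P : EuclideanSpace ℝ (Fin d) →L[ℝ] K).contDiff.contDiffAt)
    have hn : (2 : WithTop ℕ∞) ≠ 0 := by norm_num
    let g := hΦc.localInverse hΦ' hn
    have hg0 : g (Φ θ) = θ := hΦc.localInverse_apply_image hΦ' hn
    have hgc : ContDiffAt ℝ 2 g (Φ θ) := hΦc.to_localInverse hΦ' hn
    have hstrict := hΦc.hasStrictFDerivAt' hΦ' hn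
    have hgderiv : HasFDerivAt g (e.symm : _ →L[ℝ] EuclideanSpace ℝ (Fin d)) (Φ θ) :=
      hstrict.to_localInverse.hasFDerivAt
    have hright : ∀ᶠ z in nhds (Φ θ), Φ (g z) = z := hstrict.eventually_right_inverse
    have hvK : v ∈ K := hAv
    set k : K := ⟨v, hvK⟩ with hk
    set h : ℝ → EuclideanSpace ℝ (Fin km) × K := fun t => (y, P θ + t • k) with hhdef
    have hh0 : h 0 = Φ θ := by
      simp [hhdef, hΦdef, hFθ]
    have hhc : ContDiff ℝ 2 h :=
      contDiff_const.prodMk (contDiff_const.add (contDiff_id.smul contDiff_const))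
    have hhd : HasDerivAt h (0, k) 0 := by
      have h2 : HasDerivAt (fun t : ℝ => P θ + t • k) k 0 := by
        simpa using (((hasDerivAt_id (0 : ℝ)).smul_const k).const_add (P θ))
      exact HasDerivAt.prodMk (hasDerivAt_const (0 : ℝ) y) h2
    set s0 : ℝ → EuclideanSpace ℝ (Fin d) := fun t => g (h t) with hs0def
    have hs0c : ContDiffAt ℝ 2 s0 0 := by
      rw [← hh0] at hgc
      exact hgc.comp 0 hhc.contDiffAt
    have hs0d : HasDerivAt s0 v 0 := by
      rw [← hh0] at hgderiv
      have hcomp := hgderiv.comp_hasDerivAt 0 hhd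
      have hek : e v = (0, k) := by
        rw [heT' v]
        refine Prod.ext hAv ?_
        exact hPmem v hvK
      have hsymm : e.symm (0, k) = v := by
        rw [← hek, ContinuousLinearEquiv.symm_apply_apply]
      have hcomp' : HasDerivAt s0 (e.symm (0, k)) 0 := hcomp
      rwa [hsymm] at hcomp'
    have hev : ∀ᶠ t in nhds (0 : ℝ), Φ (s0 t) = h t := by
      have ht : Filter.Tendsto h (nhds 0) (nhds (Φ θ)) := by
        rw [← hh0]
        exact hhc.continuous.tendsto 0
      exact ht.eventually hright
    obtain ⟨u, hu_mem, huC⟩ := hs0c.contDiffOn le_rfl (by norm_num)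
    have humem' : ∀ᶠ t in nhds (0 : ℝ), t ∈ u := hu_mem
    have hball := hev.and humem'
    rw [Metric.eventually_nhds_iff] at hball
    obtain ⟨ε, hε, hball⟩ := hball
    have hFs0 : ∀ t, |t| < ε → F (s0 t) = y := by
      intro t ht
      have h1 := (hball (by simpa [Real.dist_eq] using ht)).1
      have h2 := congrArg Prod.fst h1
      simpa [hΦdef, hhdef] using h2
    have hs0on : ContDiffOn ℝ 2 s0 (Metric.ball 0 ε) := by
      apply huC.mono
      intro t ht
      rw [Metric.mem_ball, Real.dist_eq] at ht
      exact (hball (by simpa [Real.dist_eq] using ht)).2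
    -- reparametrization via arctan
    have hπ := Real.pi_pos
    set c : ℝ := 2 * ε / Real.pi with hcdef
    have hcpos : 0 < c := by positivity
    set φ : ℝ → ℝ := fun t => c * Real.arctan (t / c) with hφdef
    have hφc : ContDiff ℝ 2 φ :=
      contDiff_const.mul ((Real.contDiff_arctan (n := 2)).comp (contDiff_id.div_const c))
    have hφ0 : φ 0 = 0 := by simp [hφdef]
    have hφd : HasDerivAt φ 1 0 := by
      have h1 : HasDerivAt (fun t : ℝ => t / c) (1 / c) (0 : ℝ) := by
        simpa using (hasDerivAt_id (0 : ℝ)).div_const c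
      have h2 := (Real.hasDerivAt_arctan ((0 : ℝ) / c)).comp 0 h1
      have h3 := h2.const_mul c
      refine h3.congr_deriv ?_
      have hc0 : c ≠ 0 := ne_of_gt hcpos
      field_simp
      ring
    have hφlt : ∀ t, |φ t| < ε := by
      intro t
      have h1 : |Real.arctan (t / c)| < Real.pi / 2 :=
        abs_lt.mpr ⟨Real.neg_pi_div_two_lt_arctan _, Real.arctan_lt_pi_div_two _⟩
      have h2 : |φ t| = c * |Real.arctan (t / c)| := by
        rw [hφdef]
        simp [abs_mul, abs_of_pos hcpos]
      rw [h2]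
      have h3 : c * |Real.arctan (t / c)| < c * (Real.pi / 2) :=
        mul_lt_mul_of_pos_left h1 hcpos
      have h4 : c * (Real.pi / 2) = ε := by
        rw [hcdef]
        field_simp
      linarith
    refine ⟨fun t => s0 (φ t), ?_, ?_, ?_, ?_⟩
    · exact hs0on.comp_contDiff hφc fun t => by
        simpa [Metric.mem_ball, Real.dist_eq] using hφlt t
    · show s0 (φ 0) = θ
      rw [hφ0]
      show g (h 0) = θ
      rw [hh0]
      exact hg0
    · have hs0d' : HasDerivAt s0 v (φ 0) := by rw [hφ0]; exact hs0d
      have := hs0d'.scomp 0 hφd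
      rw [one_smul] at this
      exact this
    · intro t
      rw [hLdef, hFs0 (φ t) (hφlt t), sub_self, norm_zero]
      exact zero_pow two_ne_zero
end
end

section
/- Let d ≥ km, let F : ℝ^d → ℝ^{km} be twice continuously differentiable, y ∈ ℝ^{km}, L(θ) = ‖F(θ) − y‖², and Z = {θ : L(θ) = 0}. Let S ⊂ ℝ^d be a compact set such that: every θ ∈ S admits a nearest point proj_Z(θ) in Z, every such nearest point lies in S (proj_Z(S) ⊆ S), and every φ ∈ S ∩ Z is non-singular, i.e., rank(DF(φ)) = km. Then there exists a constant C > 0 such that for every θ ∈ S \ Z, every nearest point φ = proj_Z(θ) of θ in Z, and every tangent direction v ∈ T_φ, one has |vᵀ ∇L(θ)| ≤ C · dist_Z(θ) · ‖v‖ · ‖∇L(θ)‖; equivalently, whenever v ≠ 0 and ∇L(θ) ≠ 0, the cosine of the angle between v and ∇L(θ) satisfies |cos ∠(v, ∇L(θ))| < C · dist_Z(θ). -/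
open scoped RealInnerProductSpace

lemma grad_formula_aux {d km : ℕ}
    (F : EuclideanSpace ℝ (Fin d) → EuclideanSpace ℝ (Fin km))
    (hF : ContDiff ℝ 2 F) (y : EuclideanSpace ℝ (Fin km))
    (θ : EuclideanSpace ℝ (Fin d)) :
    HasGradientAt (fun θ => ‖F θ - y‖ ^ 2)
      ((2 : ℝ) • (ContinuousLinearMap.adjoint (fderiv ℝ F θ)) (F θ - y)) θ := by
  set A := fderiv ℝ F θ with hA
  have hGd : HasFDerivAt (fun t => F t - y) A θ :=
    ((hF.differentiable (by norm_num) θ).hasFDerivAt).sub_const y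
  have h1 := hGd.inner ℝ hGd
  have h2 : HasFDerivAt (fun θ => ‖F θ - y‖ ^ 2)
      ((fderivInnerCLM ℝ (F θ - y, F θ - y)).comp (A.prod A)) θ := by
    simpa only [real_inner_self_eq_norm_sq] using h1
  have key : (InnerProductSpace.toDual ℝ (EuclideanSpace ℝ (Fin d)))
      ((2 : ℝ) • (ContinuousLinearMap.adjoint A) (F θ - y))
      = (fderivInnerCLM ℝ (F θ - y, F θ - y)).comp (A.prod A) := by
    ext w
    simp only [InnerProductSpace.toDual_apply_apply, ContinuousLinearMap.comp_apply,
      ContinuousLinearMap.prod_apply, fderivInnerCLM_apply, real_inner_smul_left,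
      ContinuousLinearMap.adjoint_inner_left]
    rw [real_inner_comm (A w) (F θ - y)]
    ring
  rw [hasGradientAt_iff_hasFDerivAt, key]
  exact h2

set_option maxHeartbeats 4000000 in
/-- **Gradient Orthogonality.** Let `L(θ) = ‖F θ - y‖²` with `F` twice
continuously differentiable and `d ≥ km`, let `Z` be the zero-loss set, and let
`S` be a compact set such that every point of `S` has a nearest point in `Z`, all such
nearest points lie in `S`, and every point of `S ∩ Z` is non-singular (full-rank
Jacobian). Then there is `C > 0` such that for every `θ ∈ S \ Z`, every nearest point
`φ` of `θ` in `Z`, and every tangent direction `v` at `φ`,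
`|⟪v, ∇L(θ)⟫| ≤ C · dist_Z(θ) · ‖v‖ · ‖∇L(θ)‖`. -/
theorem stmt_11 (d km : ℕ) (hd : km ≤ d)
    (F : EuclideanSpace ℝ (Fin d) → EuclideanSpace ℝ (Fin km))
    (hF : ContDiff ℝ 2 F)
    (y : EuclideanSpace ℝ (Fin km))
    (L : EuclideanSpace ℝ (Fin d) → ℝ)
    (hLdef : ∀ θ, L θ = ‖F θ - y‖ ^ 2)
    (Z : Set (EuclideanSpace ℝ (Fin d))) (hZ : Z = {ψ | L ψ = 0})
    (S : Set (EuclideanSpace ℝ (Fin d))) (hS : IsCompact S)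
    (hproj_ex : ∀ θ ∈ S, ∃ φ ∈ Z, ‖θ - φ‖ = Metric.infDist θ Z)
    (hproj_in : ∀ θ ∈ S, ∀ φ ∈ Z, ‖θ - φ‖ = Metric.infDist θ Z → φ ∈ S)
    (hnonsing : ∀ φ ∈ S ∩ Z,
      Module.finrank ℝ (LinearMap.range (fderiv ℝ F φ : EuclideanSpace ℝ (Fin d) →ₗ[ℝ] EuclideanSpace ℝ (Fin km))) = km) :
    ∃ C > (0 : ℝ), ∀ θ ∈ S \ Z, ∀ φ ∈ Z, ‖θ - φ‖ = Metric.infDist θ Z →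
      ∀ v : EuclideanSpace ℝ (Fin d),
        (∃ s : ℝ → EuclideanSpace ℝ (Fin d),
          ContDiff ℝ 2 s ∧ s 0 = φ ∧ HasDerivAt s v 0 ∧ ∀ t : ℝ, L (s t) = 0) →
        |⟪v, gradient L θ⟫| ≤ C * Metric.infDist θ Z * ‖v‖ * ‖gradient L θ‖ := by
  classical
  have hL : L = fun θ => ‖F θ - y‖ ^ 2 := funext hLdef
  subst hL
  subst hZ
  have hFd : Differentiable ℝ F := hF.differentiable (by norm_num)
  set J : EuclideanSpace ℝ (Fin d) → (EuclideanSpace ℝ (Fin d) →L[ℝ] EuclideanSpace ℝ (Fin km)) :=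
    fderiv ℝ F with hJdef
  have hJcont : Continuous J := hF.continuous_fderiv (by norm_num)
  have hZclosed : IsClosed {ψ : EuclideanSpace ℝ (Fin d) | ‖F ψ - y‖ ^ 2 = 0} :=
    isClosed_eq (((hF.continuous.sub continuous_const).norm).pow 2) continuous_const
  -- Lipschitz constant for J on a ball containing S
  obtain ⟨R, hR⟩ := hS.isBounded.subset_closedBall 0
  have hJ1 : ContDiff ℝ 1 J := hF.fderiv_right (by norm_num)
  obtain ⟨M, hM⟩ :=
    (isCompact_closedBall (0 : EuclideanSpace ℝ (Fin d)) R).exists_bound_of_continuousOn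
    ((hJ1.continuous_fderiv (by norm_num)).continuousOn)
  set Mc : ℝ := max M 0 with hMc
  have hMc0 : 0 ≤ Mc := le_max_right _ _
  have hlip : LipschitzOnWith Mc.toNNReal J (Metric.closedBall 0 R) := by
    apply Convex.lipschitzOnWith_of_nnnorm_fderiv_le
      (fun x _ => hJ1.differentiable (by norm_num) x) ?_ (convex_closedBall _ _)
    intro x hx
    rw [← NNReal.coe_le_coe, coe_nnnorm, Real.coe_toNNReal _ hMc0]
    exact (hM x hx).trans (le_max_left _ _)
  rw [lipschitzOnWith_iff_norm_sub_le] at hlip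
  have hlip' : ∀ a ∈ Metric.closedBall (0 : EuclideanSpace ℝ (Fin d)) R,
      ∀ b ∈ Metric.closedBall (0 : EuclideanSpace ℝ (Fin d)) R,
      ‖J a - J b‖ ≤ Mc * ‖a - b‖ := by
    intro a ha b hb
    have := hlip ha hb
    rwa [Real.coe_toNNReal _ hMc0] at this
  -- uniform lower bound on the adjoint over S ∩ Z'
  set Z' : Set (EuclideanSpace ℝ (Fin d)) := {ψ | ‖F ψ - y‖ ^ 2 = 0} with hZ'
  have key : ∃ n₀ > (0 : ℝ), ∀ φ ∈ S ∩ Z', ∀ u : EuclideanSpace ℝ (Fin km),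
      n₀ * ‖u‖ ≤ ‖(ContinuousLinearMap.adjoint (J φ)) u‖ := by
    set K := (S ∩ Z') ×ˢ Metric.sphere (0 : EuclideanSpace ℝ (Fin km)) 1 with hK
    have hKc : IsCompact K := (hS.inter_right hZclosed).prod (isCompact_sphere 0 1)
    have hcont : Continuous fun p : EuclideanSpace ℝ (Fin d) × EuclideanSpace ℝ (Fin km) =>
        ‖(ContinuousLinearMap.adjoint (J p.1)) p.2‖ := by
      apply Continuous.norm
      exact (ContinuousLinearMap.adjoint.continuous.comp
        (hJcont.comp continuous_fst)).clm_apply continuous_snd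
    have hunit : ∃ n₀ > (0 : ℝ), ∀ p ∈ K,
        n₀ ≤ ‖(ContinuousLinearMap.adjoint (J p.1)) p.2‖ := by
      rcases K.eq_empty_or_nonempty with hKe | hKne
      · exact ⟨1, one_pos, by simp [hKe]⟩
      obtain ⟨p₀, hp₀K, hp₀min⟩ := hKc.exists_isMinOn hKne hcont.continuousOn
      refine ⟨‖(ContinuousLinearMap.adjoint (J p₀.1)) p₀.2‖, ?_, fun p hp => hp₀min hp⟩
      rcases hp₀K with ⟨hφ, hu⟩
      have hrange : LinearMap.range (J p₀.1 : EuclideanSpace ℝ (Fin d) →ₗ[ℝ] EuclideanSpace ℝ (Fin km)) = ⊤ := by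
        apply Submodule.eq_top_of_finrank_eq
        rw [hnonsing p₀.1 hφ, finrank_euclideanSpace_fin]
      have hsurj : Function.Surjective (J p₀.1) := LinearMap.range_eq_top.mp hrange
      have hne : (ContinuousLinearMap.adjoint (J p₀.1)) p₀.2 ≠ 0 := by
        intro h0
        obtain ⟨w, hw⟩ := hsurj p₀.2
        have hil := ContinuousLinearMap.adjoint_inner_left (J p₀.1) w p₀.2
        rw [h0, inner_zero_left, hw] at hil
        have hz : p₀.2 = 0 := inner_self_eq_zero.mp hil.symm
        have : ‖p₀.2‖ = 1 := mem_sphere_zero_iff_norm.mp hu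
        rw [hz, norm_zero] at this
        exact zero_ne_one this
      exact norm_pos_iff.mpr hne
    obtain ⟨n₀, hn₀, hn⟩ := hunit
    refine ⟨n₀, hn₀, fun φ hφ u => ?_⟩
    rcases eq_or_ne u 0 with rfl | hu
    · simp
    have hu' : ‖u‖⁻¹ • u ∈ Metric.sphere (0 : EuclideanSpace ℝ (Fin km)) 1 :=
      mem_sphere_zero_iff_norm.mpr (norm_smul_inv_norm hu)
    have := hn (φ, ‖u‖⁻¹ • u) ⟨hφ, hu'⟩
    simp only [map_smul, norm_smul, norm_inv, norm_norm] at this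
    have hupos : 0 < ‖u‖ := norm_pos_iff.mpr hu
    calc n₀ * ‖u‖ ≤ (‖u‖⁻¹ * ‖(ContinuousLinearMap.adjoint (J φ)) u‖) * ‖u‖ :=
          mul_le_mul_of_nonneg_right this hupos.le
      _ = ‖(ContinuousLinearMap.adjoint (J φ)) u‖ := by field_simp
  obtain ⟨n₀, hn₀, hn⟩ := key
  refine ⟨2 * (Mc + 1) / n₀, by positivity, ?_⟩
  rintro θ ⟨hθS, hθZ⟩ φ hφZ hnear v ⟨s, hs2, hs0, hsv, hsL⟩
  have hφS : φ ∈ S := hproj_in θ hθS φ hφZ hnear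
  rw [← hnear]
  set D : ℝ := ‖θ - φ‖ with hD
  set u : EuclideanSpace ℝ (Fin km) := F θ - y with hu
  set e : ℝ := ‖u‖ with he
  -- gradient formula
  have hgrad : gradient (fun θ => ‖F θ - y‖ ^ 2) θ
      = (2 : ℝ) • (ContinuousLinearMap.adjoint (J θ)) u :=
    (grad_formula_aux F hF y θ).gradient
  -- tangent direction is in the kernel of J φ
  have hJv : (J φ) v = 0 := by
    have hc : HasFDerivAt F (J φ) (s 0) := by rw [hs0]; exact (hFd φ).hasFDerivAt
    have hcomp : HasDerivAt (fun t => F (s t)) ((J φ) v) 0 := hc.comp_hasDerivAt 0 hsv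
    have heq : (fun t => F (s t)) = fun _ => y := by
      funext t
      have h2 : ‖F (s t) - y‖ ^ 2 = 0 := hsL t
      have h0 : ‖F (s t) - y‖ = 0 := (pow_eq_zero_iff (by norm_num : (2:ℕ) ≠ 0)).mp h2
      exact sub_eq_zero.mp (norm_eq_zero.mp h0)
    rw [heq] at hcomp
    exact hcomp.unique (hasDerivAt_const 0 y)
  have hθB : θ ∈ Metric.closedBall (0 : EuclideanSpace ℝ (Fin d)) R := hR hθS
  have hφB : φ ∈ Metric.closedBall (0 : EuclideanSpace ℝ (Fin d)) R := hR hφS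
  have hJdiff : ‖J θ - J φ‖ ≤ Mc * D := hlip' θ hθB φ hφB
  -- upper bound on the inner product
  have hupper : |⟪v, gradient (fun θ => ‖F θ - y‖ ^ 2) θ⟫| ≤ 2 * (Mc * D) * ‖v‖ * e := by
    have hip : ⟪v, gradient (fun θ => ‖F θ - y‖ ^ 2) θ⟫ = 2 * ⟪(J θ - J φ) v, u⟫ := by
      rw [hgrad, real_inner_smul_right, ContinuousLinearMap.adjoint_inner_right]
      rw [ContinuousLinearMap.sub_apply, hJv, sub_zero]
    rw [hip, abs_mul, abs_two]
    have h1 : |⟪(J θ - J φ) v, u⟫| ≤ ‖(J θ - J φ) v‖ * e := abs_real_inner_le_norm _ _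
    have h2 : ‖(J θ - J φ) v‖ ≤ ‖J θ - J φ‖ * ‖v‖ := (J θ - J φ).le_opNorm v
    have h3 : ‖(J θ - J φ) v‖ * e ≤ (Mc * D * ‖v‖) * e := by
      apply mul_le_mul_of_nonneg_right _ (norm_nonneg _)
      exact h2.trans (mul_le_mul_of_nonneg_right hJdiff (norm_nonneg _))
    calc (2 : ℝ) * |⟪(J θ - J φ) v, u⟫| ≤ 2 * ((Mc * D * ‖v‖) * e) := by linarith
      _ = 2 * (Mc * D) * ‖v‖ * e := by ring
  -- lower bound on the gradient norm
  have hlower : 2 * (n₀ - Mc * D) * e ≤ ‖gradient (fun θ => ‖F θ - y‖ ^ 2) θ‖ := by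
    rw [hgrad]
    have hnorm : ‖(2 : ℝ) • (ContinuousLinearMap.adjoint (J θ)) u‖
        = 2 * ‖(ContinuousLinearMap.adjoint (J θ)) u‖ := by
      rw [norm_smul]; norm_num
    rw [hnorm]
    have htri : ‖(ContinuousLinearMap.adjoint (J φ)) u‖
        - ‖(ContinuousLinearMap.adjoint (J θ)) u - (ContinuousLinearMap.adjoint (J φ)) u‖
        ≤ ‖(ContinuousLinearMap.adjoint (J θ)) u‖ := by
      linarith [abs_le.mp (abs_norm_sub_norm_le ((ContinuousLinearMap.adjoint (J θ)) u)
        ((ContinuousLinearMap.adjoint (J φ)) u))]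
    have hlow : n₀ * e ≤ ‖(ContinuousLinearMap.adjoint (J φ)) u‖ := hn φ ⟨hφS, hφZ⟩ u
    have hdiff : ‖(ContinuousLinearMap.adjoint (J θ)) u - (ContinuousLinearMap.adjoint (J φ)) u‖
        ≤ (Mc * D) * e := by
      have heq2 : ContinuousLinearMap.adjoint (J θ) - ContinuousLinearMap.adjoint (J φ)
          = ContinuousLinearMap.adjoint (J θ - J φ) := (map_sub _ _ _).symm
      have heq : (ContinuousLinearMap.adjoint (J θ)) u - (ContinuousLinearMap.adjoint (J φ)) u
          = (ContinuousLinearMap.adjoint (J θ - J φ)) u := by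
        rw [← heq2, ContinuousLinearMap.sub_apply]
      rw [heq]
      calc ‖(ContinuousLinearMap.adjoint (J θ - J φ)) u‖
          ≤ ‖ContinuousLinearMap.adjoint (J θ - J φ)‖ * e :=
            (ContinuousLinearMap.adjoint (J θ - J φ)).le_opNorm u
        _ = ‖J θ - J φ‖ * e := by rw [ContinuousLinearMap.adjoint.norm_map]
        _ ≤ (Mc * D) * e := mul_le_mul_of_nonneg_right hJdiff (norm_nonneg _)
    linarith
  -- make the remaining reasoning purely arithmetic
  set G : ℝ := ‖gradient (fun θ => ‖F θ - y‖ ^ 2) θ‖ with hG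
  set IP : ℝ := |⟪v, gradient (fun θ => ‖F θ - y‖ ^ 2) θ⟫| with hIP
  have hCS : IP ≤ ‖v‖ * G := abs_real_inner_le_norm _ _
  have hD0 : 0 ≤ D := norm_nonneg _
  have hv0 : 0 ≤ ‖v‖ := norm_nonneg _
  have he0 : 0 ≤ e := norm_nonneg _
  have hg0 : 0 ≤ G := norm_nonneg _
  clear_value D e G IP
  show IP ≤ 2 * (Mc + 1) / n₀ * D * ‖v‖ * G
  rcases le_or_gt D (n₀ / (2 * (Mc + 1))) with hsmall | hlarge
  · -- small distance: gradient norm is at least n₀ e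
    have hMcD : Mc * D ≤ n₀ / 2 := by
      have h1 : Mc * D ≤ (Mc + 1) * D := by nlinarith
      have h2 : (Mc + 1) * D ≤ (Mc + 1) * (n₀ / (2 * (Mc + 1))) := by nlinarith
      have h3 : (Mc + 1) * (n₀ / (2 * (Mc + 1))) = n₀ / 2 := by
        field_simp
      linarith
    have hglow : n₀ * e ≤ G := by
      nlinarith [mul_nonneg he0 (by linarith : (0:ℝ) ≤ n₀ - 2 * (Mc * D))]
    calc IP ≤ 2 * (Mc * D) * ‖v‖ * e := hupper
      _ ≤ (2 * (Mc + 1) / n₀) * D * ‖v‖ * (n₀ * e) := by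
          have hRHSeq : (2 * (Mc + 1) / n₀) * D * ‖v‖ * (n₀ * e)
              = 2 * (Mc + 1) * D * ‖v‖ * e := by
            field_simp
          rw [hRHSeq]
          nlinarith [mul_nonneg (mul_nonneg hD0 hv0) he0]
      _ ≤ (2 * (Mc + 1) / n₀) * D * ‖v‖ * G := by
          apply mul_le_mul_of_nonneg_left hglow
          positivity
  · -- large distance: Cauchy-Schwarz suffices
    have hCD : 1 ≤ (2 * (Mc + 1) / n₀) * D := by
      have h2 : (0:ℝ) < 2 * (Mc + 1) := by positivity
      rw [div_lt_iff₀ h2] at hlarge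
      rw [div_mul_eq_mul_div, le_div_iff₀ hn₀]
      nlinarith
    calc IP ≤ ‖v‖ * G := hCS
      _ = 1 * (‖v‖ * G) := (one_mul _).symm
      _ ≤ ((2 * (Mc + 1) / n₀) * D) * (‖v‖ * G) :=
          mul_le_mul_of_nonneg_right hCD (by positivity)
      _ = 2 * (Mc + 1) / n₀ * D * ‖v‖ * G := by ring
end

section
/- Let X ∈ ℝ^{n×p}, Y ∈ ℝ^{n×m}, λ > 0, and let σ : ℝ → ℝ be continuously differentiable, applied entrywise to matrices. Let W₁ ∈ ℝ^{p×h} be such that H = σ(X W₁) satisfies H Hᵀ invertible. Define the cost R(W₁) = λ ‖W₁‖_F² + λ Tr( Y Yᵀ (H Hᵀ)⁻¹ ). Then R is differentiable at W₁ with gradient ∇R(W₁) = 2λ W₁ − 2λ Xᵀ [ ( (H Hᵀ)⁻¹ Y Yᵀ (H Hᵀ)⁻¹ H ) ⊙ σ′(X W₁) ], where ⊙ denotes the entrywise (Hadamard) product and σ′ is applied entrywise. -/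
open Matrix

attribute [local instance] Matrix.frobeniusNormedAddCommGroup Matrix.frobeniusNormedSpace

section stmt17aux

attribute [local instance] Matrix.frobeniusNormedRing Matrix.frobeniusNormedAlgebra

variable {a b : ℕ}

noncomputable def evalCLM17 (i : Fin a) (j : Fin b) : Matrix (Fin a) (Fin b) ℝ →L[ℝ] ℝ :=
  LinearMap.toContinuousLinearMap (Matrix.entryLinearMap ℝ ℝ i j)

@[simp] lemma evalCLM17_apply (i : Fin a) (j : Fin b) (A : Matrix (Fin a) (Fin b) ℝ) :
    evalCLM17 i j A = A i j := rfl

noncomputable def hadCLM17 (C : Matrix (Fin a) (Fin b) ℝ) :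
    Matrix (Fin a) (Fin b) ℝ →L[ℝ] Matrix (Fin a) (Fin b) ℝ :=
  LinearMap.toContinuousLinearMap
    { toFun := fun Δ => Matrix.hadamard Δ C
      map_add' := fun Δ Δ' => by ext i j; simp [Matrix.hadamard_apply, add_mul]
      map_smul' := fun r Δ => by ext i j; simp [Matrix.hadamard_apply, mul_assoc] }

@[simp] lemma hadCLM17_apply (C Δ : Matrix (Fin a) (Fin b) ℝ) :
    hadCLM17 C Δ = Matrix.hadamard Δ C := rfl

noncomputable def lmulCLM17 {c : ℕ} (X : Matrix (Fin a) (Fin b) ℝ) :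
    Matrix (Fin b) (Fin c) ℝ →L[ℝ] Matrix (Fin a) (Fin c) ℝ :=
  LinearMap.toContinuousLinearMap
    { toFun := fun W => X * W
      map_add' := fun W V => Matrix.mul_add X W V
      map_smul' := fun r W => (Matrix.mul_smul X r W) }

@[simp] lemma lmulCLM17_apply {c : ℕ} (X : Matrix (Fin a) (Fin b) ℝ)
    (W : Matrix (Fin b) (Fin c) ℝ) : lmulCLM17 X W = X * W := rfl

noncomputable def mulTCLM17 (H₀ : Matrix (Fin a) (Fin b) ℝ) :
    Matrix (Fin a) (Fin b) ℝ →L[ℝ] Matrix (Fin a) (Fin a) ℝ :=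
  LinearMap.toContinuousLinearMap
    { toFun := fun Δ => Δ * H₀ᵀ + H₀ * Δᵀ
      map_add' := fun Δ Δ' => by
        simp [Matrix.add_mul, Matrix.mul_add, Matrix.transpose_add]; abel
      map_smul' := fun r Δ => by
        simp [Matrix.transpose_smul, Matrix.smul_mul, Matrix.mul_smul, smul_add] }

@[simp] lemma mulTCLM17_apply (H₀ Δ : Matrix (Fin a) (Fin b) ℝ) :
    mulTCLM17 H₀ Δ = Δ * H₀ᵀ + H₀ * Δᵀ := rfl

noncomputable def traceLCLM17 (A : Matrix (Fin a) (Fin a) ℝ) :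
    Matrix (Fin a) (Fin a) ℝ →L[ℝ] ℝ :=
  LinearMap.toContinuousLinearMap
    { toFun := fun M => (A * M).trace
      map_add' := fun M M' => by simp [Matrix.mul_add]
      map_smul' := fun r M => by simp [Matrix.mul_smul] }

@[simp] lemma traceLCLM17_apply (A M : Matrix (Fin a) (Fin a) ℝ) :
    traceLCLM17 A M = (A * M).trace := rfl

noncomputable def trCLM17 (W₁ : Matrix (Fin a) (Fin b) ℝ) :
    Matrix (Fin a) (Fin b) ℝ →L[ℝ] ℝ :=
  LinearMap.toContinuousLinearMap
    { toFun := fun Δ => 2 * (W₁ᵀ * Δ).trace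
      map_add' := fun Δ Δ' => by simp [Matrix.mul_add]; ring
      map_smul' := fun r Δ => by simp [Matrix.mul_smul]; ring }

@[simp] lemma trCLM17_apply (W₁ Δ : Matrix (Fin a) (Fin b) ℝ) :
    trCLM17 W₁ Δ = 2 * (W₁ᵀ * Δ).trace := rfl

lemma trace_transpose_mul_eq_sum17 (P Q : Matrix (Fin a) (Fin b) ℝ) :
    (Pᵀ * Q).trace = ∑ i : Fin a, ∑ j : Fin b, P i j * Q i j := by
  rw [Finset.sum_comm]
  simp [Matrix.trace, Matrix.diag, Matrix.mul_apply]

lemma hasFDerivAt_map17 (σ : ℝ → ℝ) (hσ : ContDiff ℝ 1 σ) (A₀ : Matrix (Fin a) (Fin b) ℝ) :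
    HasFDerivAt (fun A : Matrix (Fin a) (Fin b) ℝ => A.map σ)
      (hadCLM17 (A₀.map (deriv σ))) A₀ := by
  have key : ∀ ij : Fin a × Fin b,
      HasFDerivAt (fun A : Matrix (Fin a) (Fin b) ℝ =>
          σ (A ij.1 ij.2) • Matrix.single ij.1 ij.2 (1:ℝ))
        (((deriv σ (A₀ ij.1 ij.2)) • evalCLM17 ij.1 ij.2).smulRight
          (Matrix.single ij.1 ij.2 (1:ℝ))) A₀ := by
    intro ij
    have hd : HasDerivAt σ (deriv σ (A₀ ij.1 ij.2)) (A₀ ij.1 ij.2) :=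
      ((hσ.differentiable one_ne_zero) (A₀ ij.1 ij.2)).hasDerivAt
    have h1 : HasFDerivAt (fun A : Matrix (Fin a) (Fin b) ℝ => σ (A ij.1 ij.2))
        ((deriv σ (A₀ ij.1 ij.2)) • evalCLM17 ij.1 ij.2) A₀ :=
      hd.comp_hasFDerivAt A₀ (evalCLM17 ij.1 ij.2).hasFDerivAt
    exact h1.smul_const _
  have hsum := HasFDerivAt.fun_sum (fun ij (_ : ij ∈ (Finset.univ : Finset (Fin a × Fin b))) => key ij)
  have hfun : (fun A : Matrix (Fin a) (Fin b) ℝ =>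
      ∑ ij : Fin a × Fin b, σ (A ij.1 ij.2) • Matrix.single ij.1 ij.2 (1:ℝ))
      = fun A => A.map σ := by
    funext A
    rw [Fintype.sum_prod_type]
    conv_rhs => rw [matrix_eq_sum_single (A.map σ)]
    simp [Matrix.smul_single, Matrix.map_apply, smul_eq_mul, mul_one]
  have hD : (∑ ij : Fin a × Fin b,
        (((deriv σ (A₀ ij.1 ij.2)) • evalCLM17 ij.1 ij.2).smulRight
          (Matrix.single ij.1 ij.2 (1:ℝ))))
      = hadCLM17 (A₀.map (deriv σ)) := by
    ext Δ i j
    simp only [ContinuousLinearMap.sum_apply, ContinuousLinearMap.smulRight_apply,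
      ContinuousLinearMap.smul_apply, evalCLM17_apply, hadCLM17_apply, Matrix.sum_apply,
      Matrix.smul_apply, Matrix.single, Matrix.hadamard_apply, Matrix.map_apply,
      Matrix.of_apply, smul_eq_mul, mul_ite, mul_one, mul_zero, ite_and]
    rw [Fintype.sum_prod_type]
    simp [Finset.sum_ite_eq, Finset.sum_ite_eq', mul_comm]
  rw [← hfun, ← hD]
  exact hsum

lemma hasFDerivAt_mulT17 (H₀ : Matrix (Fin a) (Fin b) ℝ) :
    HasFDerivAt (fun H : Matrix (Fin a) (Fin b) ℝ => H * Hᵀ) (mulTCLM17 H₀) H₀ := by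
  apply hasFDerivAt_iff_isLittleO_nhds_zero.mpr
  have heq : (fun Δ : Matrix (Fin a) (Fin b) ℝ =>
      (H₀ + Δ) * (H₀ + Δ)ᵀ - H₀ * H₀ᵀ - mulTCLM17 H₀ Δ) = fun Δ => Δ * Δᵀ := by
    funext Δ
    simp [Matrix.add_mul, Matrix.mul_add, Matrix.transpose_add]
    abel
  erw [heq]
  have h1 : (fun Δ : Matrix (Fin a) (Fin b) ℝ => Δ * Δᵀ)
      =O[nhds 0] fun Δ => ‖Δ‖ ^ 2 := by
    apply Asymptotics.IsBigO.of_bound 1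
    filter_upwards with Δ
    calc ‖Δ * Δᵀ‖ ≤ ‖Δ‖ * ‖Δᵀ‖ := Matrix.frobenius_norm_mul Δ Δᵀ
      _ = ‖Δ‖ ^ 2 := by rw [Matrix.frobenius_norm_transpose]; ring
      _ ≤ 1 * ‖‖Δ‖ ^ 2‖ := by
          rw [Real.norm_eq_abs, abs_of_nonneg (sq_nonneg _), one_mul]
  exact h1.trans_isLittleO (Asymptotics.isLittleO_norm_pow_id one_lt_two)

lemma hasFDerivAt_sq_trace17 (W₁ : Matrix (Fin a) (Fin b) ℝ) :
    HasFDerivAt (fun W : Matrix (Fin a) (Fin b) ℝ => (Wᵀ * W).trace) (trCLM17 W₁) W₁ := by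
  have key : ∀ ij : Fin a × Fin b,
      HasFDerivAt (fun W : Matrix (Fin a) (Fin b) ℝ => W ij.1 ij.2 * W ij.1 ij.2)
        (W₁ ij.1 ij.2 • evalCLM17 ij.1 ij.2 + W₁ ij.1 ij.2 • evalCLM17 ij.1 ij.2) W₁ :=
    fun ij => (evalCLM17 ij.1 ij.2).hasFDerivAt.mul (evalCLM17 ij.1 ij.2).hasFDerivAt
  have hsum := HasFDerivAt.fun_sum
    (fun ij (_ : ij ∈ (Finset.univ : Finset (Fin a × Fin b))) => key ij)
  have hfun : (fun W : Matrix (Fin a) (Fin b) ℝ =>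
      ∑ ij : Fin a × Fin b, W ij.1 ij.2 * W ij.1 ij.2)
      = fun W => (Wᵀ * W).trace := by
    funext W
    rw [trace_transpose_mul_eq_sum17, Fintype.sum_prod_type]
  have hD : (∑ ij : Fin a × Fin b,
      (W₁ ij.1 ij.2 • evalCLM17 ij.1 ij.2 + W₁ ij.1 ij.2 • evalCLM17 ij.1 ij.2)) = trCLM17 W₁ := by
    ext Δ
    rw [trCLM17_apply, trace_transpose_mul_eq_sum17]
    simp only [ContinuousLinearMap.sum_apply, ContinuousLinearMap.add_apply,
      ContinuousLinearMap.smul_apply, evalCLM17_apply, smul_eq_mul]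
    rw [Fintype.sum_prod_type, Finset.mul_sum]
    congr 1; funext i
    rw [Finset.mul_sum]
    congr 1; funext j
    ring
  rw [← hfun, ← hD]
  exact hsum

lemma hasFDerivAt_matrix_inv17 {n : ℕ} (M₀ : Matrix (Fin n) (Fin n) ℝ) (hinv : IsUnit M₀) :
    HasFDerivAt (fun M : Matrix (Fin n) (Fin n) ℝ => M⁻¹)
      (-(ContinuousLinearMap.mulLeftRight ℝ _ M₀⁻¹ M₀⁻¹)) M₀ := by
  have h := hasFDerivAt_ringInverse (𝕜 := ℝ) hinv.unit
  have h1 : (↑hinv.unit⁻¹ : Matrix (Fin n) (Fin n) ℝ) = M₀⁻¹ := by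
    rw [Matrix.coe_units_inv, hinv.unit_spec]
  have h2 : (fun M : Matrix (Fin n) (Fin n) ℝ => M⁻¹) = Ring.inverse := by
    funext M; exact Matrix.nonsing_inv_eq_ringInverse M
  rw [h2]
  rw [h1] at h
  rw [hinv.unit_spec] at h
  exact h

lemma key_had17 {n' p' h' : ℕ} (B C : Matrix (Fin n') (Fin h') ℝ)
    (Xm : Matrix (Fin n') (Fin p') ℝ) (Δ : Matrix (Fin p') (Fin h') ℝ) :
    (Bᵀ * Matrix.hadamard (Xm * Δ) C).trace
      = ((Xmᵀ * Matrix.hadamard B C)ᵀ * Δ).trace := by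
  have e1 : ∀ (P Q : Matrix (Fin n') (Fin h') ℝ),
      (Pᵀ * Q).trace = ∑ i : Fin n', ∑ j : Fin h', P i j * Q i j := by
    intro P Q; rw [Finset.sum_comm]; simp [Matrix.trace, Matrix.diag, Matrix.mul_apply]
  have e2 : ∀ (P Q : Matrix (Fin p') (Fin h') ℝ),
      (Pᵀ * Q).trace = ∑ k : Fin p', ∑ j : Fin h', P k j * Q k j := by
    intro P Q; rw [Finset.sum_comm]; simp [Matrix.trace, Matrix.diag, Matrix.mul_apply]
  rw [e1, e2]
  simp only [Matrix.hadamard_apply, Matrix.mul_apply, Matrix.transpose_apply]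
  rw [Finset.sum_comm]
  conv_rhs => rw [Finset.sum_comm]
  apply Finset.sum_congr rfl; intro j _
  simp only [Finset.sum_mul, Finset.mul_sum]
  rw [Finset.sum_comm]
  apply Finset.sum_congr rfl; intro k _
  apply Finset.sum_congr rfl; intro i _
  ring

lemma trace_term17 {n h : ℕ} (A P : Matrix (Fin n) (Fin n) ℝ) (H E : Matrix (Fin n) (Fin h) ℝ)
    (hA : Aᵀ = A) (hP : Pᵀ = P) :
    (A * (P * (E * Hᵀ + H * Eᵀ) * P)).trace = 2 * ((P * A * P * H)ᵀ * E).trace := by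
  have hK : (P * A * P)ᵀ = P * A * P := by
    rw [Matrix.transpose_mul, Matrix.transpose_mul, hA, hP]
    simp only [Matrix.mul_assoc]
  have c1 : (A * (P * (E * Hᵀ) * P)).trace = ((P * A * P) * (E * Hᵀ)).trace := by
    rw [show A * (P * (E * Hᵀ) * P) = (A * (P * (E * Hᵀ))) * P by
        simp only [Matrix.mul_assoc],
      Matrix.trace_mul_comm,
      show P * (A * (P * (E * Hᵀ))) = (P * A * P) * (E * Hᵀ) by
        simp only [Matrix.mul_assoc]]
  have c2 : (A * (P * (H * Eᵀ) * P)).trace = ((P * A * P) * (E * Hᵀ)).trace := by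
    rw [show A * (P * (H * Eᵀ) * P) = (A * (P * (H * Eᵀ))) * P by
        simp only [Matrix.mul_assoc],
      Matrix.trace_mul_comm,
      show P * (A * (P * (H * Eᵀ))) = (P * A * P) * (H * Eᵀ) by
        simp only [Matrix.mul_assoc]]
    conv_lhs => rw [← Matrix.trace_transpose]
    rw [Matrix.transpose_mul, Matrix.transpose_mul, Matrix.transpose_transpose, hK,
      Matrix.trace_mul_comm]
  have c3 : ((P * A * P) * (E * Hᵀ)).trace = ((P * A * P * H)ᵀ * E).trace := by
    rw [Matrix.transpose_mul, hK,
      show (P * A * P) * (E * Hᵀ) = ((P * A * P) * E) * Hᵀ by simp only [Matrix.mul_assoc],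
      Matrix.trace_mul_comm,
      show Hᵀ * ((P * A * P) * E) = (Hᵀ * (P * A * P)) * E by simp only [Matrix.mul_assoc]]
  rw [Matrix.mul_add P, Matrix.add_mul, Matrix.mul_add A, Matrix.trace_add, c1, c2, c3]
  ring

end stmt17aux

section stmt17main

attribute [local instance] Matrix.frobeniusNormedRing Matrix.frobeniusNormedAlgebra

/-- For the first-layer cost
`R(W₁) = λ‖W₁‖_F² + λ Tr(Y Yᵀ (H Hᵀ)⁻¹)` with `H = σ(X W₁)` (σ applied entrywise,
`C¹`), at a point `W₁` where `H Hᵀ` is invertible, `R` is differentiable and its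
gradient w.r.t. the Frobenius inner product is
`2λ W₁ − 2λ Xᵀ [((H Hᵀ)⁻¹ Y Yᵀ (H Hᵀ)⁻¹ H) ⊙ σ′(X W₁)]`, where `⊙` is the
Hadamard product; i.e. the derivative in a direction `Δ` is `Tr(Gᵀ Δ)` for this `G`.
(Squared Frobenius norms are written as traces.) -/
theorem stmt_17 (n p m h : ℕ)
    (X : Matrix (Fin n) (Fin p) ℝ) (Y : Matrix (Fin n) (Fin m) ℝ)
    (lam : ℝ) (hlam : 0 < lam)
    (σ : ℝ → ℝ) (hσ : ContDiff ℝ 1 σ)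
    (W₁ : Matrix (Fin p) (Fin h) ℝ)
    (hinv : IsUnit ((X * W₁).map σ * ((X * W₁).map σ)ᵀ)) :
    ∃ D : Matrix (Fin p) (Fin h) ℝ →L[ℝ] ℝ,
      HasFDerivAt (fun W : Matrix (Fin p) (Fin h) ℝ =>
          lam * (Wᵀ * W).trace
            + lam * (Y * Yᵀ * ((X * W).map σ * ((X * W).map σ)ᵀ)⁻¹).trace) D W₁ ∧
      ∀ Δ : Matrix (Fin p) (Fin h) ℝ,
        D Δ =
          ((((2 * lam) • W₁ -
              (2 * lam) • (Xᵀ *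
                Matrix.hadamard
                  (((X * W₁).map σ * ((X * W₁).map σ)ᵀ)⁻¹ * Y * Yᵀ *
                      ((X * W₁).map σ * ((X * W₁).map σ)ᵀ)⁻¹ * (X * W₁).map σ)
                  ((X * W₁).map (deriv σ))))ᵀ) * Δ).trace := by
  set H : Matrix (Fin n) (Fin h) ℝ := (X * W₁).map σ with hH_def
  set M : Matrix (Fin n) (Fin n) ℝ := H * Hᵀ with hM_def
  set S' : Matrix (Fin n) (Fin h) ℝ := (X * W₁).map (deriv σ) with hS_def
  -- derivative of W ↦ (X*W).map σ
  have hH : HasFDerivAt (fun W : Matrix (Fin p) (Fin h) ℝ => (X * W).map σ)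
      ((hadCLM17 S').comp (lmulCLM17 X)) W₁ :=
    (hasFDerivAt_map17 σ hσ (X * W₁)).comp W₁ (lmulCLM17 X).hasFDerivAt
  have hM : HasFDerivAt (fun W : Matrix (Fin p) (Fin h) ℝ =>
      ((X * W).map σ) * ((X * W).map σ)ᵀ)
      ((mulTCLM17 H).comp ((hadCLM17 S').comp (lmulCLM17 X))) W₁ :=
    by have := (hasFDerivAt_mulT17 H).comp W₁ hH; exact this
  have hI : HasFDerivAt (fun W : Matrix (Fin p) (Fin h) ℝ =>
      (((X * W).map σ) * ((X * W).map σ)ᵀ)⁻¹)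
      ((-(ContinuousLinearMap.mulLeftRight ℝ _ M⁻¹ M⁻¹)).comp
        ((mulTCLM17 H).comp ((hadCLM17 S').comp (lmulCLM17 X)))) W₁ :=
    (hasFDerivAt_matrix_inv17 M hinv).comp W₁ hM
  have hT : HasFDerivAt (fun W : Matrix (Fin p) (Fin h) ℝ =>
      (Y * Yᵀ * (((X * W).map σ) * ((X * W).map σ)ᵀ)⁻¹).trace)
      ((traceLCLM17 (Y * Yᵀ)).comp
        ((-(ContinuousLinearMap.mulLeftRight ℝ _ M⁻¹ M⁻¹)).comp
          ((mulTCLM17 H).comp ((hadCLM17 S').comp (lmulCLM17 X))))) W₁ :=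
    (traceLCLM17 (Y * Yᵀ)).hasFDerivAt.comp W₁ hI
  have h1 : HasFDerivAt (fun W : Matrix (Fin p) (Fin h) ℝ => lam * (Wᵀ * W).trace)
      (lam • trCLM17 W₁) W₁ := (hasFDerivAt_sq_trace17 W₁).const_mul lam
  have h2 := hT.const_mul lam
  refine ⟨_, h1.add h2, ?_⟩
  intro Δ
  have hMT : Mᵀ = M := by
    rw [hM_def, Matrix.transpose_mul, Matrix.transpose_transpose]
  have hP : (M⁻¹)ᵀ = M⁻¹ := by rw [Matrix.transpose_nonsing_inv, hMT]
  have hA : (Y * Yᵀ)ᵀ = Y * Yᵀ := by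
    rw [Matrix.transpose_mul, Matrix.transpose_transpose]
  set E : Matrix (Fin n) (Fin h) ℝ := Matrix.hadamard (X * Δ) S' with hE_def
  -- compute the LHS
  change lam * (2 * (W₁ᵀ * Δ).trace) + lam * (Y * Yᵀ * -(M⁻¹ * (E * Hᵀ + H * Eᵀ) * M⁻¹)).trace = _
  rw [Matrix.mul_neg, Matrix.trace_neg]
  rw [trace_term17 (Y * Yᵀ) M⁻¹ H E hA hP]
  rw [show M⁻¹ * (Y * Yᵀ) * M⁻¹ * H = M⁻¹ * Y * Yᵀ * M⁻¹ * H by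
    rw [Matrix.mul_assoc M⁻¹ Y Yᵀ]]
  rw [key_had17 (M⁻¹ * Y * Yᵀ * M⁻¹ * H) S' X Δ]
  -- expand the RHS
  rw [Matrix.transpose_sub, Matrix.transpose_smul, Matrix.transpose_smul,
    Matrix.sub_mul, Matrix.smul_mul, Matrix.smul_mul, Matrix.trace_sub,
    Matrix.trace_smul, Matrix.trace_smul, smul_eq_mul, smul_eq_mul]
  ring

end stmt17main
end
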